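/- Let G be a 2－dc-semigroup. If i, j are non-negative integers and k, l are positive integers with i + k ≥ 2 and j + l ≥ 2, and both I_2(i,k) ⊆ G and I_2(j,l) ⊆ G, then I_2(i+j, k+l) ⊆ G. -/

import Mathlib

/-- `Ib b i k` is the set of integers `x` with `b^i ≤ x < b^(i+k)`. -/
def Ib (b i k : ℕ) : Set ℕ := {x : ℕ | b ^ i ≤ x ∧ x < b ^ (i + k)}

/-- A set `G` of positive integers is a `b`-dc-semigroup if it is closed under
multiplication and closed with respect to the number of base-`b` digits. -/
def IsDCSemigroup (b : ℕ) (G : Set ℕ) : Prop :=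
  (∀ x ∈ G, 0 < x) ∧
  (∀ x ∈ G, ∀ y ∈ G, x * y ∈ G) ∧
  (∀ x ∈ G, ∀ y : ℕ, 0 < y → Nat.log b y = Nat.log b x → y ∈ G)

theorem stmt_2 (G : Set ℕ) (hG : IsDCSemigroup 2 G)
    (i j k l : ℕ) (hk : 0 < k) (hl : 0 < l) (hik : 2 ≤ i + k) (hjl : 2 ≤ j + l)
    (h1 : Ib 2 i k ⊆ G) (h2 : Ib 2 j l ⊆ G) :
    Ib 2 (i + j) (k + l) ⊆ G := by
  obtain ⟨hpos, hmul, hdig⟩ := hG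
  intro x hx
  obtain ⟨hx1, hx2⟩ := hx
  have hxpos : 0 < x := lt_of_lt_of_le (Nat.pow_pos (by norm_num)) hx1
  set m := Nat.log 2 x with hm
  have hml : i + j ≤ m := (Nat.le_log_iff_pow_le (by norm_num) hxpos.ne').mpr hx1
  have hmu : m < i + j + (k + l) := (Nat.log_lt_iff_lt_pow (by norm_num) hxpos.ne').mpr hx2
  by_cases hcase : m ≤ i + j + k + l - 2
  · -- easy case: m = a + b with a ∈ [i, i+k-1], b ∈ [j, j+l-1]
    set a := min (i + k - 1) (m - j) with ha
    set b := m - a with hb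
    have hab : a + b = m := by omega
    have hai : i ≤ a := by omega
    have hak : a < i + k := by omega
    have hbj : j ≤ b := by omega
    have hbl : b < j + l := by omega
    have hpa : (2 : ℕ) ^ a ∈ G := h1 ⟨Nat.pow_le_pow_right (by norm_num) hai,
      Nat.pow_lt_pow_right (by norm_num) hak⟩
    have hpb : (2 : ℕ) ^ b ∈ G := h2 ⟨Nat.pow_le_pow_right (by norm_num) hbj,
      Nat.pow_lt_pow_right (by norm_num) hbl⟩
    have hprod : (2 : ℕ) ^ m ∈ G := by
      have := hmul _ hpa _ hpb
      rwa [← pow_add, hab] at this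
    exact hdig _ hprod x hxpos (by rw [Nat.log_pow (by norm_num)])
  · -- hard case: m = i + j + k + l - 1
    have hmeq : m = i + j + k + l - 1 := by omega
    set A := i + k with hA
    set B := j + l with hB
    have hpa : (2 : ℕ) ^ A - 1 ∈ G := by
      apply h1
      simp only [Ib, Set.mem_setOf_eq, ← hA]
      constructor
      · have h1' : (2 : ℕ) ^ i ≤ 2 ^ (A - 1) := Nat.pow_le_pow_right (by norm_num) (by omega)
        have h2' : (2 : ℕ) ^ (A - 1) ≤ 2 ^ A - 1 := by
          have : (2 : ℕ) ^ A = 2 * 2 ^ (A - 1) := by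
            rw [← pow_succ']
            congr 1
            omega
          have hp : 1 ≤ (2 : ℕ) ^ (A - 1) := Nat.one_le_two_pow
          omega
        omega
      · have : 1 ≤ (2 : ℕ) ^ A := Nat.one_le_two_pow
        omega
    have hpb : (2 : ℕ) ^ B - 1 ∈ G := by
      apply h2
      simp only [Ib, Set.mem_setOf_eq, ← hB]
      constructor
      · have h1' : (2 : ℕ) ^ j ≤ 2 ^ (B - 1) := Nat.pow_le_pow_right (by norm_num) (by omega)
        have h2' : (2 : ℕ) ^ (B - 1) ≤ 2 ^ B - 1 := by
          have : (2 : ℕ) ^ B = 2 * 2 ^ (B - 1) := by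
            rw [← pow_succ']
            congr 1
            omega
          have hp : 1 ≤ (2 : ℕ) ^ (B - 1) := Nat.one_le_two_pow
          omega
        omega
      · have : 1 ≤ (2 : ℕ) ^ B := Nat.one_le_two_pow
        omega
    have hprod : ((2 : ℕ) ^ A - 1) * (2 ^ B - 1) ∈ G := hmul _ hpa _ hpb
    -- bounds on the product
    have hA2 : 2 ≤ A := hik
    have hB2 : 2 ≤ B := hjl
    have e1 : (2 : ℕ) ^ A ≤ 2 ^ (A + B - 2) := Nat.pow_le_pow_right (by norm_num) (by omega)
    have e2 : (2 : ℕ) ^ B ≤ 2 ^ (A + B - 2) := Nat.pow_le_pow_right (by norm_num) (by omega)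
    have e3 : (2 : ℕ) ^ (A + B) = 4 * 2 ^ (A + B - 2) := by
      have h : A + B = 2 + (A + B - 2) := by omega
      rw [h, pow_add]; norm_num
    have e4 : (2 : ℕ) ^ (A + B - 1) = 2 * 2 ^ (A + B - 2) := by
      have h : A + B - 1 = 1 + (A + B - 2) := by omega
      rw [h, pow_add]; norm_num
    have e5 : (2 : ℕ) ^ A * 2 ^ B = 2 ^ (A + B) := (pow_add 2 A B).symm
    have eApos : 1 ≤ (2 : ℕ) ^ A := Nat.one_le_two_pow
    have eBpos : 1 ≤ (2 : ℕ) ^ B := Nat.one_le_two_pow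
    have hlow : (2 : ℕ) ^ (A + B - 1) ≤ (2 ^ A - 1) * (2 ^ B - 1) := by
      have expand : ((2 : ℕ) ^ A - 1) * (2 ^ B - 1) + 2 ^ A + 2 ^ B = 2 ^ (A + B) + 1 := by
        zify [eApos, eBpos]
        push_cast [← e5]
        ring
      omega
    have hhigh : ((2 : ℕ) ^ A - 1) * (2 ^ B - 1) < 2 ^ (A + B) := by
      calc ((2 : ℕ) ^ A - 1) * (2 ^ B - 1) ≤ 2 ^ A * (2 ^ B - 1) :=
            Nat.mul_le_mul_right _ (Nat.sub_le _ _)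
        _ < 2 ^ A * 2 ^ B := by
            exact Nat.mul_lt_mul_of_le_of_lt (le_refl _) (by omega)
              (Nat.pow_pos (by norm_num))
        _ = 2 ^ (A + B) := e5
    have hlog : Nat.log 2 (((2 : ℕ) ^ A - 1) * (2 ^ B - 1)) = m := by
      apply Nat.log_eq_of_pow_le_of_lt_pow
      · rw [hmeq]
        convert hlow using 2
        omega
      · have : m + 1 = A + B := by omega
        rw [this]
        exact hhigh
    exact hdig _ hprod x hxpos (by rw [hlog])
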